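/- Let r > 0 and let (vⱼ, yⱼ) be finitely many pairs with vⱼ ∈ ℝᵈ, yⱼ ∈ {-1,1}, linearly separable (there exists u with yⱼ(u·vⱼ) ≥ 1 for all j). Then the problem min ‖w₁‖² + ‖w₂‖² subject to yⱼ((w₁ + r·w₂)·vⱼ) ≥ 1 has a unique optimal solution, and it satisfies w₁ = u*/(1+r²) and w₂ = r·u*/(1+r²), where u* is the unique optimizer of min ‖u‖² subject to yⱼ(u·vⱼ) ≥ 1. -/

import Mathlib

open Matrix BigOperators Finset

/-- The GNN max-margin problem over r-regular graphs has a unique optimal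
solution given explicitly in terms of the SVM max-margin solution `ustar`. -/
theorem unique_solution_formula {d m : ℕ} (r : ℝ) (hr : 0 < r)
    (v : Fin m → Fin d → ℝ) (y : Fin m → ℝ)
    (hy : ∀ j, y j = 1 ∨ y j = -1)
    (hsep : ∃ u : Fin d → ℝ, ∀ j, y j * (u ⬝ᵥ v j) ≥ 1)
    (ustar : Fin d → ℝ)
    (hufeas : ∀ j, y j * (ustar ⬝ᵥ v j) ≥ 1)
    (huopt : ∀ u : Fin d → ℝ, (∀ j, y j * (u ⬝ᵥ v j) ≥ 1) →
      ustar ⬝ᵥ ustar ≤ u ⬝ᵥ u)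
    (huunique : ∀ u : Fin d → ℝ, (∀ j, y j * (u ⬝ᵥ v j) ≥ 1) →
      u ⬝ᵥ u = ustar ⬝ᵥ ustar → u = ustar) :
    ∃! p : (Fin d → ℝ) × (Fin d → ℝ),
      ((∀ j, y j * ((p.1 + r • p.2) ⬝ᵥ v j) ≥ 1) ∧
        ∀ q : (Fin d → ℝ) × (Fin d → ℝ),
          (∀ j, y j * ((q.1 + r • q.2) ⬝ᵥ v j) ≥ 1) →
          p.1 ⬝ᵥ p.1 + p.2 ⬝ᵥ p.2 ≤ q.1 ⬝ᵥ q.1 + q.2 ⬝ᵥ q.2) ∧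
      p.1 = (1 + r ^ 2)⁻¹ • ustar ∧ p.2 = (r / (1 + r ^ 2)) • ustar := by
  have hpos : (0:ℝ) < 1 + r ^ 2 := by positivity
  have hsum : (1 + r ^ 2)⁻¹ • ustar + r • (r / (1 + r ^ 2)) • ustar = ustar := by
    rw [smul_smul, ← add_smul]
    have : (1 + r ^ 2)⁻¹ + r * (r / (1 + r ^ 2)) = 1 := by
      field_simp
    rw [this, one_smul]
  refine ⟨((1 + r ^ 2)⁻¹ • ustar, (r / (1 + r ^ 2)) • ustar), ⟨⟨?_, ?_⟩, rfl, rfl⟩, ?_⟩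
  · intro j
    simpa [hsum] using hufeas j
  · intro q hq
    have hu := huopt (q.1 + r • q.2) hq
    have key : (q.1 + r • q.2) ⬝ᵥ (q.1 + r • q.2)
        = q.1 ⬝ᵥ q.1 + 2 * r * (q.1 ⬝ᵥ q.2) + r ^ 2 * (q.2 ⬝ᵥ q.2) := by
      simp [add_dotProduct, dotProduct_add, smul_dotProduct, dotProduct_smul,
        dotProduct_comm q.2 q.1]
      ring
    have hnn : 0 ≤ (r • q.1 - q.2) ⬝ᵥ (r • q.1 - q.2) :=
      Finset.sum_nonneg fun i _ => mul_self_nonneg _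
    have key2 : (r • q.1 - q.2) ⬝ᵥ (r • q.1 - q.2)
        = r ^ 2 * (q.1 ⬝ᵥ q.1) - 2 * r * (q.1 ⬝ᵥ q.2) + q.2 ⬝ᵥ q.2 := by
      simp [sub_dotProduct, dotProduct_sub, smul_dotProduct, dotProduct_smul,
        dotProduct_comm q.2 q.1]
      ring
    have hval : ((1 + r ^ 2)⁻¹ • ustar) ⬝ᵥ ((1 + r ^ 2)⁻¹ • ustar)
        + ((r / (1 + r ^ 2)) • ustar) ⬝ᵥ ((r / (1 + r ^ 2)) • ustar)
        = (ustar ⬝ᵥ ustar) / (1 + r ^ 2) := by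
      simp [smul_dotProduct, dotProduct_smul]
      field_simp
    simp only [hval]
    rw [div_le_iff₀ hpos]
    nlinarith [hu, key, key2, hnn]
  · rintro q ⟨_, h1, h2⟩
    exact Prod.ext h1 h2
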